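/- Let A be an n×n real symmetric matrix and v a random vector with i.i.d. Rademacher entries. Then Var(vᵀAv) = 2(‖A‖_F² − Σ_{i=1}^n A_{ii}²), where ‖A‖_F is the Frobenius norm. -/

import Mathlib

open MeasureTheory ProbabilityTheory Matrix

/-- The Rademacher distribution on ℝ: ±1 with probability 1/2 each. -/
noncomputable def radMeasure : Measure ℝ :=
  (1/2 : ENNReal) • Measure.dirac 1 + (1/2 : ENNReal) • Measure.dirac (-1)

section Aux

variable {Ω : Type*} [MeasureSpace Ω] [IsProbabilityMeasure (ℙ : Measure Ω)]

lemma rad_ae (X : Ω → ℝ) (hm : Measurable X)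
    (hd : Measure.map X ℙ = radMeasure) : ∀ᵐ ω, X ω = 1 ∨ X ω = -1 := by
  have hs : MeasurableSet {x : ℝ | x = 1 ∨ x = -1} := by
    have : {x : ℝ | x = 1 ∨ x = -1} = {1, -1} := by ext x; simp [Set.mem_insert_iff]
    rw [this]; exact (Set.finite_singleton _ |>.insert _).measurableSet
  have h0 : ℙ {ω | ¬ (X ω = 1 ∨ X ω = -1)} = 0 := by
    have : {ω | ¬ (X ω = 1 ∨ X ω = -1)} = X ⁻¹' {x : ℝ | x = 1 ∨ x = -1}ᶜ := by
      ext ω; simp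
    rw [this, ← Measure.map_apply hm hs.compl, hd]
    simp [radMeasure, Measure.dirac_apply' _ hs.compl]
  exact h0

lemma rad_mean (X : Ω → ℝ) (hm : Measurable X)
    (hd : Measure.map X ℙ = radMeasure) : ∫ ω, X ω ∂ℙ = 0 := by
  have h1 : ∫ ω, X ω ∂ℙ = ∫ x, id x ∂(Measure.map X ℙ) := by
    rw [integral_map hm.aemeasurable aestronglyMeasurable_id]; rfl
  have hint : ∀ (a : ℝ), Integrable (fun x : ℝ => x) ((1/2 : ENNReal) • Measure.dirac a) := by
    intro a
    refine ⟨aestronglyMeasurable_id, ?_⟩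
    rw [HasFiniteIntegral, lintegral_smul_measure, lintegral_dirac]
    exact ENNReal.mul_lt_top (by norm_num) (by simp)
  simp only [h1, hd, radMeasure, id]
  rw [integral_add_measure (hint 1) (hint (-1)), integral_smul_measure, integral_smul_measure,
    integral_dirac, integral_dirac]
  norm_num

variable {n : ℕ} (v : Ω → Fin n → ℝ)

lemma integral_prod_pow (hmeas : ∀ i, Measurable (fun ω => v ω i))
    (hindep : iIndepFun (fun i ω => v ω i) ℙ)
    (m : Fin n → ℕ) (s : Finset (Fin n)) :
    ∫ ω, ∏ i ∈ s, (v ω i)^(m i) ∂ℙ = ∏ i ∈ s, ∫ ω, (v ω i)^(m i) ∂ℙ := by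
  classical
  induction s using Finset.induction with
  | empty => simp
  | insert _ _ hi _ =>
    rename_i i s ih
    have hY : iIndepFun (fun j ω => (v ω j)^(m j)) ℙ :=
      hindep.comp (fun j x => x ^ (m j)) (fun j => measurable_id.pow_const _)
    have hdep : IndepFun (∏ j ∈ s, fun ω => (v ω j)^(m j)) (fun ω => (v ω i)^(m i)) ℙ :=
      hY.indepFun_finsetProd_of_notMem (fun j => (hmeas j).pow_const _) hi
    have h1 : ∫ ω, ((∏ j ∈ s, fun ω => (v ω j)^(m j)) * fun ω => (v ω i)^(m i)) ω ∂ℙ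
        = (∫ ω, (∏ j ∈ s, fun ω => (v ω j)^(m j)) ω ∂ℙ) * ∫ ω, (v ω i)^(m i) ∂ℙ :=
      hdep.integral_mul_eq_mul_integral
        (by rw [Finset.prod_fn]
            exact Finset.aestronglyMeasurable_fun_prod _
              fun j _ => ((hmeas j).pow_const _).aestronglyMeasurable)
        ((hmeas i).pow_const _).aestronglyMeasurable
    simp only [Finset.prod_apply, Pi.mul_apply] at h1
    rw [Finset.prod_insert hi, ← ih]
    simp only [Finset.prod_insert hi]
    calc ∫ ω, (v ω i)^(m i) * ∏ j ∈ s, (v ω j)^(m j) ∂ℙ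
        = ∫ ω, (∏ j ∈ s, (v ω j)^(m j)) * (v ω i)^(m i) ∂ℙ := by
          congr 1; ext ω; ring
      _ = (∫ ω, ∏ j ∈ s, (v ω j)^(m j) ∂ℙ) * ∫ ω, (v ω i)^(m i) ∂ℙ := h1
      _ = _ := by ring

lemma pow_moment (hmeas : ∀ i, Measurable (fun ω => v ω i))
    (hdist : ∀ i, Measure.map (fun ω => v ω i) ℙ = radMeasure)
    (i : Fin n) (k : ℕ) :
    ∫ ω, (v ω i)^k ∂ℙ = if Even k then 1 else 0 := by
  have hae := rad_ae _ (hmeas i) (hdist i)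
  rcases Nat.even_or_odd k with he | ho
  · have h1 : ∀ᵐ ω, (v ω i)^k = 1 := by
      filter_upwards [hae] with ω hω
      rcases hω with h | h <;> rw [h]
      · simp
      · exact Even.neg_one_pow he
    rw [integral_congr_ae h1, if_pos he]
    simp
  · have h1 : ∀ᵐ ω, (v ω i)^k = v ω i := by
      filter_upwards [hae] with ω hω
      rcases hω with h | h <;> rw [h]
      · simp
      · exact Odd.neg_one_pow ho
    rw [integral_congr_ae h1, if_neg (Nat.not_even_iff_odd.mpr ho)]
    exact rad_mean _ (hmeas i) (hdist i)

lemma even2_iff {i j t : Fin n} :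
    (∀ t : Fin n, Even ((if i = t then 1 else 0) + (if j = t then 1 else 0) : ℕ)) ↔ i = j := by
  constructor
  · intro h
    have hi := h i
    by_cases hj : j = i
    · exact hj.symm
    · simp_all [Nat.even_iff]
  · rintro rfl t; by_cases h : i = t <;> simp [h]

lemma two_moment (hmeas : ∀ i, Measurable (fun ω => v ω i))
    (hdist : ∀ i, Measure.map (fun ω => v ω i) ℙ = radMeasure)
    (hindep : iIndepFun (fun i ω => v ω i) ℙ)
    (i j : Fin n) :
    ∫ ω, v ω i * v ω j ∂ℙ = if i = j then 1 else 0 := by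
  classical
  set m : Fin n → ℕ := fun t => (if i = t then 1 else 0) + (if j = t then 1 else 0) with hm
  have h1 : ∀ ω, v ω i * v ω j = ∏ t, (v ω t)^(m t) := by
    intro ω
    simp only [hm, pow_add, Finset.prod_mul_distrib, pow_ite, pow_one, pow_zero,
      Finset.prod_ite_eq, Finset.mem_univ, if_true]
  calc ∫ ω, v ω i * v ω j ∂ℙ = ∫ ω, ∏ t, (v ω t)^(m t) ∂ℙ := by simp only [h1]
    _ = ∏ t, ∫ ω, (v ω t)^(m t) ∂ℙ := integral_prod_pow v hmeas hindep m _
    _ = ∏ t, if Even (m t) then (1:ℝ) else 0 := by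
        refine Finset.prod_congr rfl fun t _ => pow_moment v hmeas hdist t (m t)
    _ = if ∀ t, Even (m t) then 1 else 0 := by rw [Fintype.prod_boole]; congr 1
    _ = if i = j then 1 else 0 := by
        refine if_congr ?_ rfl rfl
        exact even2_iff (t := i)

lemma even4_iff {i j k l : Fin n} :
    (∀ t : Fin n, Even ((if i = t then 1 else 0) + (if j = t then 1 else 0)
      + (if k = t then 1 else 0) + (if l = t then 1 else 0) : ℕ))
    ↔ ((i = j ∧ k = l) ∨ (i = k ∧ j = l) ∨ (i = l ∧ j = k)) := by
  constructor
  · intro h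
    have hi := h i; have hj := h j; have hk := h k; have hl := h l
    simp only [Nat.even_iff] at hi hj hk hl
    by_cases h1 : i = j <;> by_cases h2 : i = k <;> by_cases h3 : i = l <;>
      by_cases h4 : j = k <;> by_cases h5 : j = l <;> by_cases h6 : k = l <;>
      simp_all <;> omega
  · rintro (⟨h1, h2⟩ | ⟨h1, h2⟩ | ⟨h1, h2⟩) t <;>
      by_cases hit : i = t <;> by_cases hjt : j = t <;> by_cases hkt : k = t <;>
      by_cases hlt : l = t <;> simp_all [Nat.even_iff]

lemma four_moment (hmeas : ∀ i, Measurable (fun ω => v ω i))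
    (hdist : ∀ i, Measure.map (fun ω => v ω i) ℙ = radMeasure)
    (hindep : iIndepFun (fun i ω => v ω i) ℙ)
    (i j k l : Fin n) :
    ∫ ω, v ω i * v ω j * v ω k * v ω l ∂ℙ
      = if (i = j ∧ k = l) ∨ (i = k ∧ j = l) ∨ (i = l ∧ j = k) then 1 else 0 := by
  classical
  set m : Fin n → ℕ := fun t => (if i = t then 1 else 0) + (if j = t then 1 else 0)
    + (if k = t then 1 else 0) + (if l = t then 1 else 0) with hm
  have h1 : ∀ ω, v ω i * v ω j * v ω k * v ω l = ∏ t, (v ω t)^(m t) := by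
    intro ω
    simp only [hm, pow_add, Finset.prod_mul_distrib, pow_ite, pow_one, pow_zero,
      Finset.prod_ite_eq, Finset.mem_univ, if_true]
  calc ∫ ω, v ω i * v ω j * v ω k * v ω l ∂ℙ = ∫ ω, ∏ t, (v ω t)^(m t) ∂ℙ := by simp only [h1]
    _ = ∏ t, ∫ ω, (v ω t)^(m t) ∂ℙ := integral_prod_pow v hmeas hindep m _
    _ = ∏ t, if Even (m t) then (1:ℝ) else 0 := by
        refine Finset.prod_congr rfl fun t _ => pow_moment v hmeas hdist t (m t)
    _ = if ∀ t, Even (m t) then 1 else 0 := by rw [Fintype.prod_boole]; congr 1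
    _ = _ := if_congr even4_iff rfl rfl

end Aux

lemma indicator_split {α : Type*} [DecidableEq α] (i j k l : α) :
    (if (i = k ∧ j = l) ∨ (i = j ∧ k = l) ∨ (i = l ∧ j = k) then (1:ℝ) else 0)
    = (if i = k ∧ j = l then (1:ℝ) else 0)
      + (if i = j then (1:ℝ) else 0) * (if k = l then (1:ℝ) else 0)
      + (if i = l ∧ j = k then (1:ℝ) else 0)
      - 2 * (if i = j ∧ j = k ∧ k = l then (1:ℝ) else 0) := by
  by_cases h1 : i = j <;> by_cases h2 : k = l <;> by_cases h3 : i = k <;>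
    by_cases h4 : j = l <;> by_cases h5 : i = l <;> by_cases h6 : j = k <;>
    simp_all <;> norm_num

theorem variance_quadratic_form_rademacher
    {n : ℕ} (A : Matrix (Fin n) (Fin n) ℝ) (hA : A.IsSymm)
    {Ω : Type*} [MeasureSpace Ω] [IsProbabilityMeasure (ℙ : Measure Ω)]
    (v : Ω → Fin n → ℝ)
    (hmeas : ∀ i, Measurable (fun ω => v ω i))
    (hdist : ∀ i, Measure.map (fun ω => v ω i) ℙ = radMeasure)
    (hindep : iIndepFun (fun i ω => v ω i) ℙ) :
    variance (fun ω => v ω ⬝ᵥ A.mulVec (v ω)) ℙ =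
      2 * ((∑ i, ∑ j, A i j ^ 2) - ∑ i, A i i ^ 2) := by
  classical
  set X : Ω → ℝ := fun ω => v ω ⬝ᵥ A.mulVec (v ω) with hXdef
  have hae : ∀ᵐ ω, ∀ i, v ω i = 1 ∨ v ω i = -1 :=
    ae_all_iff.2 fun i => rad_ae _ (hmeas i) (hdist i)
  have hX_eq : ∀ ω, X ω = ∑ p : Fin n × Fin n, A p.1 p.2 * (v ω p.1 * v ω p.2) := by
    intro ω
    rw [Fintype.sum_prod_type]
    simp only [hXdef, dotProduct, mulVec, Finset.mul_sum]
    refine Finset.sum_congr rfl fun i _ => Finset.sum_congr rfl fun j _ => by ring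
  -- integrability of pair and quadruple products
  have hInt2 : ∀ i j : Fin n, Integrable (fun ω => v ω i * v ω j) ℙ := by
    intro i j
    refine memLp_one_iff_integrable.mp (MemLp.of_bound
      (((hmeas i).mul (hmeas j)).aestronglyMeasurable) 1 ?_)
    filter_upwards [hae] with ω hω
    rcases hω i with h | h <;> rcases hω j with h' | h' <;> simp [h, h']
  have hInt4 : ∀ i j k l : Fin n, Integrable (fun ω => v ω i * v ω j * v ω k * v ω l) ℙ := by
    intro i j k l
    refine memLp_one_iff_integrable.mp (MemLp.of_bound
      ((((hmeas i).mul (hmeas j)).mul ((hmeas k))).mul (hmeas l)).aestronglyMeasurable 1 ?_)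
    filter_upwards [hae] with ω hω
    rcases hω i with h | h <;> rcases hω j with h' | h' <;> rcases hω k with h'' | h'' <;>
      rcases hω l with h''' | h''' <;> simp [h, h', h'', h''']
  -- X is in L²
  have hXmeas : Measurable X := by
    have : Measurable fun ω => ∑ p : Fin n × Fin n, A p.1 p.2 * (v ω p.1 * v ω p.2) := by
      apply Finset.measurable_sum
      intro p _
      exact ((hmeas p.1).mul (hmeas p.2)).const_mul _
    have heq : X = fun ω => ∑ p : Fin n × Fin n, A p.1 p.2 * (v ω p.1 * v ω p.2) :=
      funext hX_eq
    rw [heq]; exact this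
  have hXL2 : MemLp X 2 ℙ := by
    refine MemLp.of_bound hXmeas.aestronglyMeasurable (∑ p : Fin n × Fin n, |A p.1 p.2|) ?_
    filter_upwards [hae] with ω hω
    rw [Real.norm_eq_abs, hX_eq ω]
    refine (Finset.abs_sum_le_sum_abs _ _).trans (Finset.sum_le_sum fun p _ => ?_)
    rw [abs_mul]
    have h1 : |v ω p.1 * v ω p.2| = 1 := by
      rcases hω p.1 with h | h <;> rcases hω p.2 with h' | h' <;> simp [h, h']
    rw [h1, mul_one]
  have hEX : ∫ ω, X ω ∂ℙ = ∑ i, A i i := by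
    calc ∫ ω, X ω ∂ℙ = ∫ ω, ∑ p : Fin n × Fin n, A p.1 p.2 * (v ω p.1 * v ω p.2) ∂ℙ := by
          simp only [hX_eq]
      _ = ∑ p : Fin n × Fin n, ∫ ω, A p.1 p.2 * (v ω p.1 * v ω p.2) ∂ℙ :=
          integral_finset_sum _ fun p _ => (hInt2 p.1 p.2).const_mul _
      _ = ∑ p : Fin n × Fin n, A p.1 p.2 * ∫ ω, v ω p.1 * v ω p.2 ∂ℙ := by
          simp only [integral_const_mul]
      _ = ∑ p : Fin n × Fin n, A p.1 p.2 * (if p.1 = p.2 then 1 else 0) := by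
          simp only [two_moment v hmeas hdist hindep]
      _ = ∑ i, A i i := by
          rw [Fintype.sum_prod_type]
          simp [mul_ite, Finset.sum_ite_eq]
  have hEX2 : ∫ ω, X ω ^ 2 ∂ℙ = ∑ p : Fin n × Fin n, ∑ q : Fin n × Fin n,
      A p.1 p.2 * A q.1 q.2 *
        (if (p.1 = q.1 ∧ p.2 = q.2) ∨ (p.1 = p.2 ∧ q.1 = q.2) ∨ (p.1 = q.2 ∧ p.2 = q.1)
          then 1 else 0) := by
    have hsq : ∀ ω, X ω ^ 2 = ∑ p : Fin n × Fin n, ∑ q : Fin n × Fin n,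
        A p.1 p.2 * A q.1 q.2 * (v ω p.1 * v ω p.2 * v ω q.1 * v ω q.2) := by
      intro ω
      rw [sq, hX_eq ω, Finset.sum_mul_sum]
      exact Finset.sum_congr rfl fun p _ => Finset.sum_congr rfl fun q _ => by ring
    calc ∫ ω, X ω ^ 2 ∂ℙ
        = ∑ p : Fin n × Fin n, ∑ q : Fin n × Fin n, ∫ ω,
            A p.1 p.2 * A q.1 q.2 * (v ω p.1 * v ω p.2 * v ω q.1 * v ω q.2) ∂ℙ := by
          simp only [hsq]
          rw [integral_finset_sum _ fun p _ => ?_]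
          · exact Finset.sum_congr rfl fun p _ => integral_finset_sum _ fun q _ =>
              ((hInt4 p.1 p.2 q.1 q.2).const_mul _)
          · exact integrable_finset_sum _ fun q _ => ((hInt4 p.1 p.2 q.1 q.2).const_mul _)
      _ = _ := by
          refine Finset.sum_congr rfl fun p _ => Finset.sum_congr rfl fun q _ => ?_
          rw [integral_const_mul, four_moment v hmeas hdist hindep]
          congr 1
          refine if_congr ?_ rfl rfl
          tauto
  have hsymm : ∀ i j : Fin n, A j i = A i j := fun i j => by
    have := congrFun (congrFun hA i) j
    simpa [Matrix.transpose_apply] using this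
  have split : ∀ i j k l : Fin n,
      A i j * A k l * (if (i = k ∧ j = l) ∨ (i = j ∧ k = l) ∨ (i = l ∧ j = k)
          then (1:ℝ) else 0)
      = A i j * A k l * (if i = k ∧ j = l then (1:ℝ) else 0)
        + A i j * A k l * ((if i = j then (1:ℝ) else 0) * (if k = l then (1:ℝ) else 0))
        + A i j * A k l * (if i = l ∧ j = k then (1:ℝ) else 0)
        - 2 * (A i j * A k l * (if i = j ∧ j = k ∧ k = l then (1:ℝ) else 0)) := by
    intro i j k l
    rw [indicator_split i j k l]
    ring
  have hS2 : (∑ i, ∑ j, ∑ k, ∑ l, A i j * A k l * (if i = k ∧ j = l then (1:ℝ) else 0))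
      = ∑ i, ∑ j, A i j ^ 2 := by
    simp [ite_and, mul_ite, mul_one, mul_zero, Finset.sum_ite_eq, sq]
  have hS1 : (∑ i, ∑ j, ∑ k, ∑ l, A i j * A k l *
      ((if i = j then (1:ℝ) else 0) * (if k = l then (1:ℝ) else 0)))
      = (∑ i, A i i) ^ 2 := by
    rw [sq, Finset.sum_mul_sum]
    simp [mul_ite, ite_mul, mul_one, mul_zero, zero_mul, Finset.sum_ite_eq]
  have hS3 : (∑ i, ∑ j, ∑ k, ∑ l, A i j * A k l * (if i = l ∧ j = k then (1:ℝ) else 0))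
      = ∑ i, ∑ j, A i j ^ 2 := by
    have : ∀ i j : Fin n, A i j * A j i = A i j ^ 2 := fun i j => by rw [hsymm i j, sq]
    simp only [ite_and, mul_ite, mul_one, mul_zero, Finset.sum_ite_eq, Finset.mem_univ,
      if_true]
    refine Finset.sum_congr rfl fun i _ => Finset.sum_congr rfl fun j _ => ?_
    simp [this]
  have hS4 : (∑ i, ∑ j, ∑ k, ∑ l, A i j * A k l * (if i = j ∧ j = k ∧ k = l then (1:ℝ) else 0))
      = ∑ i, A i i ^ 2 := by
    simp [ite_and, mul_ite, mul_one, mul_zero, Finset.sum_ite_eq, sq]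
  have hvar : variance X ℙ = (∫ ω, X ω ^ 2 ∂ℙ) - (∫ ω, X ω ∂ℙ) ^ 2 := by
    rw [variance_eq_sub hXL2]
    rfl
  have hmain : (∑ p : Fin n × Fin n, ∑ q : Fin n × Fin n,
      A p.1 p.2 * A q.1 q.2 *
        (if (p.1 = q.1 ∧ p.2 = q.2) ∨ (p.1 = p.2 ∧ q.1 = q.2) ∨ (p.1 = q.2 ∧ p.2 = q.1)
          then (1:ℝ) else 0))
      = (∑ i, ∑ j, A i j ^ 2) + (∑ i, A i i) ^ 2 + (∑ i, ∑ j, A i j ^ 2)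
        - 2 * ∑ i, A i i ^ 2 := by
    rw [Fintype.sum_prod_type]
    calc (∑ i, ∑ j, ∑ q : Fin n × Fin n, A i j * A q.1 q.2 *
          (if (i = q.1 ∧ j = q.2) ∨ (i = j ∧ q.1 = q.2) ∨ (i = q.2 ∧ j = q.1)
            then (1:ℝ) else 0))
        = ∑ i, ∑ j, ∑ k, ∑ l, A i j * A k l *
          (if (i = k ∧ j = l) ∨ (i = j ∧ k = l) ∨ (i = l ∧ j = k) then (1:ℝ) else 0) := by
          refine Finset.sum_congr rfl fun i _ => Finset.sum_congr rfl fun j _ => ?_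
          rw [Fintype.sum_prod_type]
      _ = ∑ i, ∑ j, ∑ k, ∑ l, (A i j * A k l * (if i = k ∧ j = l then (1:ℝ) else 0)
            + A i j * A k l * ((if i = j then (1:ℝ) else 0) * (if k = l then (1:ℝ) else 0))
            + A i j * A k l * (if i = l ∧ j = k then (1:ℝ) else 0)
            - 2 * (A i j * A k l * (if i = j ∧ j = k ∧ k = l then (1:ℝ) else 0))) := by
          exact Finset.sum_congr rfl fun i _ => Finset.sum_congr rfl fun j _ =>
            Finset.sum_congr rfl fun k _ => Finset.sum_congr rfl fun l _ => split i j k l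
      _ = (∑ i, ∑ j, A i j ^ 2) + (∑ i, A i i) ^ 2 + (∑ i, ∑ j, A i j ^ 2)
          - 2 * ∑ i, A i i ^ 2 := by
          simp only [Finset.sum_add_distrib, Finset.sum_sub_distrib, ← Finset.mul_sum]
          rw [hS1, hS2, hS3, hS4]
  rw [hvar, hEX2, hEX, hmain]
  ring
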